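/- For all integers n ≥ k ≥ 0 and r ≥ 0, the partial r-Bell polynomial B^r_{n+r,k+r} ∈ R equals the sum, over all bicolored set partitions π ∈ S^r_{n+r,k+r}, of the monomial ∏_{blocks B of π colored 1} a_{|B|} · ∏_{blocks B of π colored 2} b_{|B|}. -/

import Mathlib

noncomputable section

/-- `R = ℚ[a_1,a_2,…;b_1,b_2,…]`, realized as the polynomial ring over `ℚ` with variables
`X (true, i) = a_i` and `X (false, i) = b_i`. -/
abbrev RR : Type := MvPolynomial (Bool × ℕ) ℚ

/-- the variable `a_i` -/
def va (i : ℕ) : RR := MvPolynomial.X (true, i)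
/-- the variable `b_i` -/
def vb (i : ℕ) : RR := MvPolynomial.X (false, i)

/-- the derivation `∂` of `R` with `∂ a_i = a_{i+1}` and `∂ b_i = b_{i+1}` -/
def del : RR → RR :=
  fun p => MvPolynomial.mkDerivation ℚ (fun s : Bool × ℕ => MvPolynomial.X (s.1, s.2 + 1)) p

/-- coefficientwise extension of a map on coefficients to `R[t]` (i.e. `∂` with `∂ t = 0`) -/
def polyLift {A : Type*} [Semiring A] (D : A → A) (p : Polynomial A) : Polynomial A :=
  p.sum fun i c => Polynomial.C (D c) * Polynomial.X ^ i

/-- the map `E : R[t] → R[t]`, `E(p) = t·b_1·p + ∂(p)` -/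
def EOp (p : Polynomial RR) : Polynomial RR :=
  Polynomial.C (vb 1) * Polynomial.X * p + polyLift del p

/-- the partial `r`-Bell polynomial `B^r_{n+r,k+r}`: the coefficient of `t^k` in `E^n(a_1^r)` -/
def rBell (n k r : ℕ) : RR := (EOp^[n] (Polynomial.C (va 1 ^ r))).coeff k

/-- `IsBSP N k r π` : `π` is a bicolored set partition of `{0,…,N-1}` (representing
`{1,…,N}`) into `k + r` pairwise disjoint nonempty blocks, each block carrying a color
(`true` = color 1, `false` = color 2), such that the blocks colored 1 are exactly the
blocks containing one of the first `r` elements and the first `r` elements lie in `r`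
distinct blocks (so exactly `r` blocks are colored 1 and `k` blocks are colored 2).
For `N = n + r` this is membership in `S^r_{n+r,k+r}`. -/
def IsBSP (N k r : ℕ) (π : Finset (Finset (Fin N) × Bool)) : Prop :=
  π.card = k + r ∧
  (∀ p ∈ π, p.1.Nonempty) ∧
  (∀ p ∈ π, ∀ q ∈ π, p ≠ q → Disjoint p.1 q.1) ∧
  (∀ x : Fin N, ∃ p ∈ π, x ∈ p.1) ∧
  (∀ p ∈ π, (p.2 = true ↔ ∃ i ∈ p.1, (i : ℕ) < r)) ∧
  (∀ p ∈ π, ∀ i ∈ p.1, ∀ j ∈ p.1, (i : ℕ) < r → (j : ℕ) < r → i = j)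

set_option synthInstance.maxSize 2000 in
instance (N k r : ℕ) : DecidablePred (IsBSP N k r) := fun π => by
  unfold IsBSP; infer_instance
open Finset

def delD : Derivation ℚ RR RR :=
  MvPolynomial.mkDerivation ℚ (fun s : Bool × ℕ => MvPolynomial.X (s.1, s.2 + 1))

lemma del_eq (p : RR) : del p = delD p := rfl

lemma del_X (s : Bool × ℕ) : del (MvPolynomial.X s) = MvPolynomial.X (s.1, s.2 + 1) :=
  MvPolynomial.mkDerivation_X ℚ _ s

lemma del_va (i : ℕ) : del (va i) = va (i + 1) := del_X _
lemma del_vb (i : ℕ) : del (vb i) = vb (i + 1) := del_X _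

lemma del_zero : del 0 = 0 := by simp [del_eq]

lemma del_sum {ι : Type*} (s : Finset ι) (f : ι → RR) :
    del (∑ i ∈ s, f i) = ∑ i ∈ s, del (f i) := by
  simp [del_eq, map_sum]

lemma del_mul (p q : RR) : del (p * q) = p * del q + q * del p := by
  simp [del_eq, delD.leibniz p q, smul_eq_mul]

lemma del_prod {ι : Type*} [DecidableEq ι] (s : Finset ι) (f : ι → RR) :
    del (∏ i ∈ s, f i) = ∑ i ∈ s, del (f i) * ∏ j ∈ s.erase i, f j := by
  induction s using Finset.induction_on with
  | empty => simp [del_eq]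
  | @insert a s h ih =>
    rw [Finset.prod_insert h, del_mul, ih, Finset.mul_sum, Finset.sum_insert h,
      Finset.erase_insert h, add_comm (del (f a) * ∏ j ∈ s, f j)]
    congr 1
    · apply Finset.sum_congr rfl
      intro x hx
      rw [Finset.erase_insert_of_ne (by rintro rfl; exact h hx), Finset.prod_insert
        (fun hc => h (Finset.mem_of_mem_erase hc))]
      ring
    · ring

lemma coeff_polyLift (p : Polynomial RR) (k : ℕ) :
    (polyLift del p).coeff k = del (p.coeff k) := by
  unfold polyLift
  rw [Polynomial.sum_def, Polynomial.finset_sum_coeff]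
  simp only [Polynomial.coeff_C_mul, Polynomial.coeff_X_pow, mul_ite, mul_one, mul_zero]
  rw [Finset.sum_ite_eq p.support k (fun i => del (p.coeff i))]
  by_cases h : k ∈ p.support
  · simp [h]
  · simp [h, Polynomial.notMem_support_iff.mp h, del_zero]

lemma EOp_coeff_zero (p : Polynomial RR) : (EOp p).coeff 0 = del (p.coeff 0) := by
  simp [EOp, coeff_polyLift, Polynomial.mul_coeff_zero]

lemma EOp_coeff_succ (p : Polynomial RR) (k : ℕ) :
    (EOp p).coeff (k + 1) = vb 1 * p.coeff k + del (p.coeff (k + 1)) := by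
  simp only [EOp, Polynomial.coeff_add, coeff_polyLift]
  rw [mul_assoc, Polynomial.coeff_C_mul, Polynomial.coeff_X_mul]

lemma rBell_zero (k r : ℕ) : rBell 0 k r = if k = 0 then va 1 ^ r else 0 := by
  simp only [rBell, Function.iterate_zero, id_eq, Polynomial.coeff_C]

lemma rBell_succ_zero (n r : ℕ) : rBell (n + 1) 0 r = del (rBell n 0 r) := by
  simp [rBell, Function.iterate_succ_apply', EOp_coeff_zero]

lemma rBell_succ_succ (n k r : ℕ) :
    rBell (n + 1) (k + 1) r = vb 1 * rBell n k r + del (rBell n (k + 1) r) := by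
  simp [rBell, Function.iterate_succ_apply', EOp_coeff_succ]
open Finset

section maps

variable {N : ℕ}

def upB (B : Finset (Fin N)) : Finset (Fin (N + 1)) :=
  B.map ⟨Fin.castSucc, Fin.castSucc_injective N⟩

def downB (B : Finset (Fin (N + 1))) : Finset (Fin N) :=
  B.preimage Fin.castSucc (Fin.castSucc_injective N).injOn

lemma mem_downB {B : Finset (Fin (N + 1))} {x : Fin N} : x ∈ downB B ↔ x.castSucc ∈ B :=
  Finset.mem_preimage

lemma mem_upB {B : Finset (Fin N)} {y : Fin (N + 1)} :
    y ∈ upB B ↔ ∃ x ∈ B, x.castSucc = y := by simp [upB]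

lemma castSucc_mem_upB {B : Finset (Fin N)} {x : Fin N} : x.castSucc ∈ upB B ↔ x ∈ B := by
  rw [mem_upB]
  constructor
  · rintro ⟨z, hz, hzx⟩; rwa [← Fin.castSucc_injective N hzx]
  · exact fun h => ⟨x, h, rfl⟩

lemma last_not_mem_upB (B : Finset (Fin N)) : Fin.last N ∉ upB B := by
  rw [mem_upB]
  rintro ⟨x, -, hx⟩
  exact (Fin.castSucc_lt_last x).ne hx

lemma downB_upB (B : Finset (Fin N)) : downB (upB B) = B := by
  ext x; rw [mem_downB, castSucc_mem_upB]

lemma card_upB (B : Finset (Fin N)) : (upB B).card = B.card := Finset.card_map _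

lemma downB_insert_last (B : Finset (Fin (N + 1))) :
    downB (insert (Fin.last N) B) = downB B := by
  ext x
  rw [mem_downB, mem_downB, Finset.mem_insert]
  constructor
  · rintro (h | h)
    · exact absurd h (Fin.castSucc_lt_last x).ne
    · exact h
  · exact Or.inr

lemma downB_erase_last (B : Finset (Fin (N + 1))) :
    downB (B.erase (Fin.last N)) = downB B := by
  ext x
  rw [mem_downB, mem_downB, Finset.mem_erase]
  exact ⟨fun h => h.2, fun h => ⟨(Fin.castSucc_lt_last x).ne, h⟩⟩

lemma upB_downB {B : Finset (Fin (N + 1))} (h : Fin.last N ∉ B) : upB (downB B) = B := by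
  ext y
  rw [mem_upB]
  constructor
  · rintro ⟨x, hx, rfl⟩; exact mem_downB.mp hx
  · intro hy
    have hne : y ≠ Fin.last N := by rintro rfl; exact h hy
    obtain ⟨x, rfl⟩ := Fin.exists_castSucc_eq.mpr hne
    exact ⟨x, mem_downB.mpr hy, rfl⟩

lemma upB_downB_erase (B : Finset (Fin (N + 1))) :
    upB (downB B) = B.erase (Fin.last N) := by
  rw [← downB_erase_last, upB_downB (Finset.notMem_erase _ _)]

lemma card_downB_of_not_mem {B : Finset (Fin (N + 1))} (h : Fin.last N ∉ B) :
    (downB B).card = B.card := by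
  rw [← card_upB (downB B), upB_downB h]

lemma card_downB_of_mem {B : Finset (Fin (N + 1))} (h : Fin.last N ∈ B) :
    (downB B).card = B.card - 1 := by
  rw [← card_upB (downB B), upB_downB_erase, Finset.card_erase_of_mem h]

def upP (p : Finset (Fin N) × Bool) : Finset (Fin (N + 1)) × Bool := (upB p.1, p.2)

def dP (p : Finset (Fin (N + 1)) × Bool) : Finset (Fin N) × Bool := (downB p.1, p.2)

lemma dP_upP (p : Finset (Fin N) × Bool) : dP (upP p) = p := by
  cases p; simp [dP, upP, downB_upB]

lemma upP_injective : Function.Injective (upP (N := N)) := by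
  intro p q h
  have h2 := congrArg dP h
  rwa [dP_upP, dP_upP] at h2

def vf (p : Finset (Fin N) × Bool) : RR := if p.2 then va p.1.card else vb p.1.card

lemma vf_upP (p : Finset (Fin N) × Bool) : vf (upP p) = vf p := by
  simp [vf, upP, card_upB]

lemma del_vf (p : Finset (Fin N) × Bool) :
    del (vf p) = if p.2 then va (p.1.card + 1) else vb (p.1.card + 1) := by
  rcases p with ⟨B, b⟩
  cases b <;> simp [vf, del_va, del_vb]

def lam (N : ℕ) : Finset (Fin (N + 1)) × Bool := ({Fin.last N}, false)

def newblk (p : Finset (Fin N) × Bool) : Finset (Fin (N + 1)) × Bool :=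
  (insert (Fin.last N) (upB p.1), p.2)

def upPart (π : Finset (Finset (Fin N) × Bool)) : Finset (Finset (Fin (N + 1)) × Bool) :=
  π.image upP

def downPart (π : Finset (Finset (Fin (N + 1)) × Bool)) : Finset (Finset (Fin N) × Bool) :=
  π.image dP

def jA (π : Finset (Finset (Fin N) × Bool)) : Finset (Finset (Fin (N + 1)) × Bool) :=
  insert (lam N) (upPart π)

def iA (π : Finset (Finset (Fin (N + 1)) × Bool)) : Finset (Finset (Fin N) × Bool) :=
  downPart (π.erase (lam N))

def jB (π : Finset (Finset (Fin N) × Bool)) (p : Finset (Fin N) × Bool) :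
    Finset (Finset (Fin (N + 1)) × Bool) :=
  insert (newblk p) (upPart (π.erase p))

lemma lam_not_mem_upPart (π : Finset (Finset (Fin N) × Bool)) : lam N ∉ upPart π := by
  intro h
  obtain ⟨q, -, hq⟩ := Finset.mem_image.mp h
  have : Fin.last N ∈ upB q.1 := by
    rw [show upB q.1 = ({Fin.last N} : Finset (Fin (N+1))) from congrArg Prod.fst hq]
    exact Finset.mem_singleton_self _
  exact last_not_mem_upB q.1 this

lemma newblk_not_mem_upPart (T : Finset (Fin (N+1))) (c : Bool)
    (π : Finset (Finset (Fin N) × Bool)) : (insert (Fin.last N) T, c) ∉ upPart π := by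
  intro h
  obtain ⟨q, -, hq⟩ := Finset.mem_image.mp h
  have : Fin.last N ∈ upB q.1 := by
    rw [show upB q.1 = insert (Fin.last N) T from congrArg Prod.fst hq]
    exact Finset.mem_insert_self _ _
  exact last_not_mem_upB q.1 this

lemma downPart_upPart (π : Finset (Finset (Fin N) × Bool)) : downPart (upPart π) = π := by
  rw [downPart, upPart, Finset.image_image]
  rw [show dP ∘ upP = (id : Finset (Fin N) × Bool → _) from funext fun p => dP_upP p]
  exact Finset.image_id

lemma upPart_downPart {π : Finset (Finset (Fin (N+1)) × Bool)}
    (hL : ∀ p ∈ π, Fin.last N ∉ p.1) : upPart (downPart π) = π := by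
  rw [upPart, downPart, Finset.image_image]
  rw [Finset.image_congr (g := id) (fun p hp => by
    show (upB (downB p.1), p.2) = p
    rw [upB_downB (hL p hp)])]
  exact Finset.image_id

lemma iA_jA (π : Finset (Finset (Fin N) × Bool)) : iA (jA π) = π := by
  rw [iA, jA, Finset.erase_insert (lam_not_mem_upPart π), downPart_upPart]

end maps
section transfer

variable {N k r : ℕ}

lemma block_eq {M m s : ℕ} {π : Finset (Finset (Fin M) × Bool)} (h : IsBSP M m s π)
    {p q : Finset (Fin M) × Bool} (hp : p ∈ π) (hq : q ∈ π) {x : Fin M}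
    (hxp : x ∈ p.1) (hxq : x ∈ q.1) : p = q := by
  by_contra hne
  exact Finset.disjoint_left.mp (h.2.2.1 p hp q hq hne) hxp hxq

lemma card_true_blocks {M m s : ℕ} (hr : s ≤ M) {π : Finset (Finset (Fin M) × Bool)}
    (h : IsBSP M m s π) : (π.filter (fun p => p.2 = true)).card = s := by
  have hcol := h.2.2.2.2.1
  have huniq := h.2.2.2.2.2
  have key : ∀ p ∈ π.filter (fun p => p.2 = true), ∃ i : Fin M, i ∈ p.1 ∧ (i : ℕ) < s := by
    intro p hp
    rw [Finset.mem_filter] at hp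
    obtain ⟨i, hi, hir⟩ := (hcol p hp.1).mp hp.2
    exact ⟨i, hi, hir⟩
  rw [← Fintype.card_fin s, ← Finset.card_univ]
  apply Finset.card_bij (fun p hp => (⟨((key p hp).choose : Fin M).val,
    (key p hp).choose_spec.2⟩ : Fin s))
  · intro p hp; exact Finset.mem_univ _
  · intro p hp q hq heq
    have h1 := (key p hp).choose_spec
    have h2 := (key q hq).choose_spec
    have hval : ((key p hp).choose : Fin M) = (key q hq).choose :=
      Fin.ext (by simpa using congrArg Fin.val heq)
    rw [Finset.mem_filter] at hp hq
    exact block_eq h hp.1 hq.1 h1.1 (by rw [hval]; exact h2.1)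
  · intro x _
    obtain ⟨p, hp, hxp⟩ := h.2.2.2.1 ⟨x.val, lt_of_lt_of_le x.isLt hr⟩
    have hpt : p.2 = true := (hcol p hp).mpr ⟨_, hxp, x.isLt⟩
    have hpf : p ∈ π.filter (fun p => p.2 = true) := Finset.mem_filter.mpr ⟨hp, hpt⟩
    refine ⟨p, hpf, ?_⟩
    have h1 := (key p hpf).choose_spec
    have heq := huniq p hp _ h1.1 _ hxp h1.2 x.isLt
    exact Fin.ext (by simpa using congrArg Fin.val heq)

lemma lam_not_mem_of_k_zero (hr : r ≤ N) {π : Finset (Finset (Fin (N+1)) × Bool)}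
    (h : IsBSP (N+1) 0 r π) : lam N ∉ π := by
  intro hΛ
  have hc := card_true_blocks (show r ≤ N + 1 by omega) h
  have hcardπ : π.card = r := by rw [h.1]; omega
  have heq : π.filter (fun p => p.2 = true) = π :=
    Finset.eq_of_subset_of_card_le (Finset.filter_subset _ _) (by rw [hc, hcardπ])
  have hmem : lam N ∈ π.filter (fun p => p.2 = true) := by rw [heq]; exact hΛ
  have := (Finset.mem_filter.mp hmem).2
  simp [lam] at this

lemma exists_ne_last (hr : r ≤ N) {π : Finset (Finset (Fin (N+1)) × Bool)} {m : ℕ}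
    (h : IsBSP (N+1) m r π) (hΛ : lam N ∉ π) :
    ∀ p ∈ π, ∃ x ∈ p.1, x ≠ Fin.last N := by
  intro p hp
  obtain ⟨x, hx⟩ := h.2.1 p hp
  by_cases hxL : x = Fin.last N
  · subst hxL
    by_contra hcon
    push_neg at hcon
    have hsingle : p.1 = {Fin.last N} := by
      apply Finset.eq_singleton_iff_unique_mem.mpr
      exact ⟨hx, fun y hy => hcon y hy⟩
    have hpf : p.2 = false := by
      rcases Bool.eq_false_or_eq_true p.2 with hb | hb
      · obtain ⟨i, hi, hir⟩ := (h.2.2.2.2.1 p hp).mp hb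
        rw [hsingle, Finset.mem_singleton] at hi
        subst hi
        rw [Fin.val_last] at hir
        omega
      · exact hb
    have : p = lam N := Prod.ext hsingle hpf
    exact hΛ (this ▸ hp)
  · exact ⟨x, hx, hxL⟩

/-- downward transfer -/
lemma IsBSP_downPart (hr : r ≤ N) {π : Finset (Finset (Fin (N+1)) × Bool)} {m : ℕ}
    (hcard : π.card = m + r)
    (hne' : ∀ p ∈ π, ∃ x ∈ p.1, x ≠ Fin.last N)
    (hdisj : ∀ p ∈ π, ∀ q ∈ π, p ≠ q → Disjoint p.1 q.1)
    (hcov : ∀ x : Fin N, ∃ p ∈ π, x.castSucc ∈ p.1)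
    (hcol : ∀ p ∈ π, (p.2 = true ↔ ∃ i ∈ p.1, (i : ℕ) < r))
    (huniq : ∀ p ∈ π, ∀ i ∈ p.1, ∀ j ∈ p.1, (i : ℕ) < r → (j : ℕ) < r → i = j) :
    IsBSP N m r (downPart π) := by
  have hnonempty : ∀ p ∈ π, (downB p.1).Nonempty := by
    intro p hp
    obtain ⟨x, hx, hxL⟩ := hne' p hp
    obtain ⟨y, rfl⟩ := Fin.exists_castSucc_eq.mpr hxL
    exact ⟨y, mem_downB.mpr hx⟩
  have hinj : ∀ p ∈ π, ∀ q ∈ π, dP p = dP q → p = q := by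
    intro p hp q hq hpq
    obtain ⟨y, hy⟩ := hnonempty p hp
    have h1 : y.castSucc ∈ p.1 := mem_downB.mp hy
    have h2 : y.castSucc ∈ q.1 := mem_downB.mp (by
      have : downB p.1 = downB q.1 := congrArg Prod.fst hpq
      rwa [this] at hy)
    by_contra hne''
    exact Finset.disjoint_left.mp (hdisj p hp q hq hne'') h1 h2
  refine ⟨?_, ?_, ?_, ?_, ?_, ?_⟩
  · rw [downPart, Finset.card_image_of_injOn (fun p hp q hq => hinj p hp q hq), hcard]
  · rintro a ha
    obtain ⟨p, hp, rfl⟩ := Finset.mem_image.mp ha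
    exact hnonempty p hp
  · rintro a ha b hb hab
    obtain ⟨p, hp, rfl⟩ := Finset.mem_image.mp ha
    obtain ⟨q, hq, rfl⟩ := Finset.mem_image.mp hb
    have hpq : p ≠ q := fun e => hab (by rw [e])
    rw [Finset.disjoint_left]
    intro x hxp hxq
    exact Finset.disjoint_left.mp (hdisj p hp q hq hpq)
      (mem_downB.mp hxp) (mem_downB.mp hxq)
  · intro x
    obtain ⟨p, hp, hxp⟩ := hcov x
    exact ⟨dP p, Finset.mem_image_of_mem dP hp, mem_downB.mpr hxp⟩
  · rintro a ha
    obtain ⟨p, hp, rfl⟩ := Finset.mem_image.mp ha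
    show p.2 = true ↔ _
    rw [hcol p hp]
    constructor
    · rintro ⟨i, hi, hir⟩
      have hiL : i ≠ Fin.last N := by
        intro e; subst e; rw [Fin.val_last] at hir; omega
      obtain ⟨y, rfl⟩ := Fin.exists_castSucc_eq.mpr hiL
      exact ⟨y, mem_downB.mpr hi, by simpa using hir⟩
    · rintro ⟨i, hi, hir⟩
      exact ⟨i.castSucc, mem_downB.mp hi, by simpa using hir⟩
  · rintro a ha i hi j hj hir hjr
    obtain ⟨p, hp, rfl⟩ := Finset.mem_image.mp ha
    have := huniq p hp i.castSucc (mem_downB.mp hi) j.castSucc (mem_downB.mp hj)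
      (by simpa using hir) (by simpa using hjr)
    exact Fin.castSucc_injective N this

/-- upward transfer -/
lemma IsBSP_upPart (hr : r ≤ N) {π : Finset (Finset (Fin N) × Bool)} {B : Finset (Fin N)}
    {c : Bool} {m : ℕ}
    (hcard : π.card + 1 = m + r)
    (hne : ∀ p ∈ π, p.1.Nonempty)
    (hdisj : ∀ p ∈ π, ∀ q ∈ π, p ≠ q → Disjoint p.1 q.1)
    (hdisjB : ∀ p ∈ π, Disjoint B p.1)
    (hcov : ∀ x : Fin N, x ∈ B ∨ ∃ p ∈ π, x ∈ p.1)
    (hcol : ∀ p ∈ π, (p.2 = true ↔ ∃ i ∈ p.1, (i : ℕ) < r))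
    (hcolB : c = true ↔ ∃ i ∈ B, (i : ℕ) < r)
    (huniq : ∀ p ∈ π, ∀ i ∈ p.1, ∀ j ∈ p.1, (i : ℕ) < r → (j : ℕ) < r → i = j)
    (huniqB : ∀ i ∈ B, ∀ j ∈ B, (i : ℕ) < r → (j : ℕ) < r → i = j) :
    IsBSP (N+1) m r (insert (insert (Fin.last N) (upB B), c) (upPart π)) := by
  have hnm : (insert (Fin.last N) (upB B), c) ∉ upPart π := newblk_not_mem_upPart _ _ _
  have hlastB : ∀ i ∈ upB B, i ≠ Fin.last N := by
    intro i hi e; subst e; exact last_not_mem_upB B hi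
  refine ⟨?_, ?_, ?_, ?_, ?_, ?_⟩
  · rw [Finset.card_insert_of_notMem hnm, upPart,
      Finset.card_image_of_injective _ upP_injective, hcard]
  · rintro a ha
    rcases Finset.mem_insert.mp ha with rfl | ha
    · exact ⟨Fin.last N, Finset.mem_insert_self _ _⟩
    · obtain ⟨p, hp, rfl⟩ := Finset.mem_image.mp ha
      obtain ⟨x, hx⟩ := hne p hp
      exact ⟨x.castSucc, castSucc_mem_upB.mpr hx⟩
  · have haux : ∀ q ∈ π, Disjoint (insert (Fin.last N) (upB B)) (upB q.1) := by
      intro q hq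
      rw [Finset.disjoint_left]
      intro x hx hxq
      rcases Finset.mem_insert.mp hx with rfl | hx
      · exact last_not_mem_upB q.1 hxq
      · obtain ⟨y, hy, rfl⟩ := mem_upB.mp hx
        have hyq : y ∈ q.1 := castSucc_mem_upB.mp hxq
        exact Finset.disjoint_left.mp (hdisjB q hq) hy hyq
    rintro a ha b hb hab
    rcases Finset.mem_insert.mp ha with rfl | ha <;>
      rcases Finset.mem_insert.mp hb with rfl | hb
    · exact absurd rfl hab
    · obtain ⟨q, hq, rfl⟩ := Finset.mem_image.mp hb
      exact haux q hq
    · obtain ⟨q, hq, rfl⟩ := Finset.mem_image.mp ha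
      exact (haux q hq).symm
    · obtain ⟨p, hp, rfl⟩ := Finset.mem_image.mp ha
      obtain ⟨q, hq, rfl⟩ := Finset.mem_image.mp hb
      have hpq : p ≠ q := fun e => hab (by rw [e])
      rw [Finset.disjoint_left]
      intro x hxp hxq
      obtain ⟨y, hy, rfl⟩ := mem_upB.mp hxp
      exact Finset.disjoint_left.mp (hdisj p hp q hq hpq) hy (castSucc_mem_upB.mp hxq)
  · intro y
    by_cases hyL : y = Fin.last N
    · exact ⟨_, Finset.mem_insert_self _ _, by rw [hyL]; exact Finset.mem_insert_self _ _⟩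
    · obtain ⟨x, rfl⟩ := Fin.exists_castSucc_eq.mpr hyL
      rcases hcov x with hx | ⟨p, hp, hx⟩
      · exact ⟨_, Finset.mem_insert_self _ _,
          Finset.mem_insert_of_mem (castSucc_mem_upB.mpr hx)⟩
      · exact ⟨upP p, Finset.mem_insert_of_mem (Finset.mem_image_of_mem upP hp),
          castSucc_mem_upB.mpr hx⟩
  · rintro a ha
    rcases Finset.mem_insert.mp ha with rfl | ha
    · show c = true ↔ _
      rw [hcolB]
      constructor
      · rintro ⟨i, hi, hir⟩
        exact ⟨i.castSucc, Finset.mem_insert_of_mem (castSucc_mem_upB.mpr hi),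
          by simpa using hir⟩
      · rintro ⟨i, hi, hir⟩
        rcases Finset.mem_insert.mp hi with rfl | hi
        · rw [Fin.val_last] at hir; omega
        · obtain ⟨y, hy, rfl⟩ := mem_upB.mp hi
          exact ⟨y, hy, by simpa using hir⟩
    · obtain ⟨p, hp, rfl⟩ := Finset.mem_image.mp ha
      show p.2 = true ↔ _
      rw [hcol p hp]
      constructor
      · rintro ⟨i, hi, hir⟩
        exact ⟨i.castSucc, castSucc_mem_upB.mpr hi, by simpa using hir⟩
      · rintro ⟨i, hi, hir⟩
        obtain ⟨y, hy, rfl⟩ := mem_upB.mp hi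
        exact ⟨y, hy, by simpa using hir⟩
  · rintro a ha i hi j hj hir hjr
    have hsmall : ∀ x : Fin (N+1), (x : ℕ) < r → x ≠ Fin.last N := by
      intro x hx e; subst e; rw [Fin.val_last] at hx; omega
    rcases Finset.mem_insert.mp ha with rfl | ha
    · rcases Finset.mem_insert.mp hi with rfl | hi
      · exact absurd hir (by rw [Fin.val_last]; omega)
      · rcases Finset.mem_insert.mp hj with rfl | hj
        · exact absurd hjr (by rw [Fin.val_last]; omega)
        · obtain ⟨y, hy, rfl⟩ := mem_upB.mp hi
          obtain ⟨z, hz, rfl⟩ := mem_upB.mp hj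
          have := huniqB y hy z hz (by simpa using hir) (by simpa using hjr)
          rw [this]
    · obtain ⟨p, hp, rfl⟩ := Finset.mem_image.mp ha
      obtain ⟨y, hy, rfl⟩ := mem_upB.mp hi
      obtain ⟨z, hz, rfl⟩ := mem_upB.mp hj
      have := huniq p hp y hy z hz (by simpa using hir) (by simpa using hjr)
      rw [this]

end transfer
section sums

variable {N k r : ℕ}

def Sfin (M m s : ℕ) : RR :=
  ∑ π ∈ Finset.univ.filter (fun π : Finset (Finset (Fin M) × Bool) => IsBSP M m s π),
    ∏ p ∈ π, vf p

open scoped Classical in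
noncomputable def theLastBlock (π : Finset (Finset (Fin (N+1)) × Bool)) :
    Finset (Fin (N+1)) × Bool :=
  if h : ∃! p, p ∈ π ∧ Fin.last N ∈ p.1 then Finset.choose _ π h else (∅, false)

lemma existsUnique_lastBlock {m : ℕ} {π : Finset (Finset (Fin (N+1)) × Bool)}
    (h : IsBSP (N+1) m r π) : ∃! p, p ∈ π ∧ Fin.last N ∈ p.1 := by
  obtain ⟨p, hp, hLp⟩ := h.2.2.2.1 (Fin.last N)
  exact ⟨p, ⟨hp, hLp⟩, fun q hq => block_eq h hq.1 hp hq.2 hLp⟩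

lemma theLastBlock_spec {m : ℕ} {π : Finset (Finset (Fin (N+1)) × Bool)}
    (h : IsBSP (N+1) m r π) :
    theLastBlock π ∈ π ∧ Fin.last N ∈ (theLastBlock π).1 := by
  rw [theLastBlock, dif_pos (existsUnique_lastBlock h)]
  exact ⟨Finset.choose_mem (fun p => Fin.last N ∈ p.1) π (existsUnique_lastBlock h),
    Finset.choose_property (fun p => Fin.last N ∈ p.1) π (existsUnique_lastBlock h)⟩

lemma theLastBlock_eq {m : ℕ} {π : Finset (Finset (Fin (N+1)) × Bool)}
    (h : IsBSP (N+1) m r π) {q} (hq : q ∈ π) (hLq : Fin.last N ∈ q.1) :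
    theLastBlock π = q :=
  block_eq h (theLastBlock_spec h).1 hq (theLastBlock_spec h).2 hLq

lemma image_erase_of_injOn {α β : Type*} [DecidableEq α] [DecidableEq β] {f : α → β}
    {s : Finset α} (hinj : ∀ a ∈ s, ∀ b ∈ s, f a = f b → a = b) {a : α} (ha : a ∈ s) :
    (s.image f).erase (f a) = (s.erase a).image f := by
  ext b
  rw [Finset.mem_erase, Finset.mem_image, Finset.mem_image]
  constructor
  · rintro ⟨hb, c, hc, rfl⟩
    exact ⟨c, Finset.mem_erase.mpr ⟨fun e => hb (by rw [e]), hc⟩, rfl⟩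
  · rintro ⟨c, hc, rfl⟩
    obtain ⟨hca, hc'⟩ := Finset.mem_erase.mp hc
    exact ⟨fun e => hca (hinj c hc' a ha e), c, hc', rfl⟩

lemma dP_injOn {π : Finset (Finset (Fin (N+1)) × Bool)}
    (hne' : ∀ p ∈ π, ∃ x ∈ p.1, x ≠ Fin.last N)
    (hdisj : ∀ p ∈ π, ∀ q ∈ π, p ≠ q → Disjoint p.1 q.1) :
    ∀ p ∈ π, ∀ q ∈ π, dP p = dP q → p = q := by
  intro p hp q hq hpq
  obtain ⟨x, hx, hxL⟩ := hne' p hp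
  obtain ⟨y, rfl⟩ := Fin.exists_castSucc_eq.mpr hxL
  have h1 : y ∈ downB p.1 := mem_downB.mpr hx
  have h2 : y.castSucc ∈ q.1 := mem_downB.mp (by
    have : downB p.1 = downB q.1 := congrArg Prod.fst hpq
    rwa [this] at h1)
  by_contra hne''
  exact Finset.disjoint_left.mp (hdisj p hp q hq hne'') hx h2

lemma vf_dP_of_not_last {p : Finset (Fin (N+1)) × Bool} (hL : Fin.last N ∉ p.1) :
    vf (dP p) = vf p := by
  rcases p with ⟨B, b⟩
  simp only [vf, dP]
  rw [card_downB_of_not_mem hL]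
  rfl

lemma del_vf_dP {q : Finset (Fin (N+1)) × Bool} (hqL : Fin.last N ∈ q.1) :
    del (vf (dP q)) = vf q := by
  rcases q with ⟨B, b⟩
  have hpos : 1 ≤ B.card := Finset.card_pos.mpr ⟨_, hqL⟩
  rw [del_vf]
  simp only [dP, vf]
  rw [card_downB_of_mem hqL]
  rw [show B.card - 1 + 1 = B.card from by omega]
  rfl

lemma dP_newblk (p : Finset (Fin N) × Bool) : dP (newblk p) = p := by
  rcases p with ⟨B, b⟩
  show (downB (insert (Fin.last N) (upB B)), b) = (B, b)
  rw [downB_insert_last, downB_upB]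

lemma newblk_mem_self (π : Finset (Finset (Fin N) × Bool)) (p : Finset (Fin N) × Bool) :
    newblk p ∈ jB π p := Finset.mem_insert_self _ _

lemma last_mem_newblk (p : Finset (Fin N) × Bool) : Fin.last N ∈ (newblk p).1 :=
  Finset.mem_insert_self _ _

lemma isbsp_jB (hr : r ≤ N) {π' : Finset (Finset (Fin N) × Bool)}
    (h : IsBSP N k r π') {p} (hp : p ∈ π') : IsBSP (N+1) k r (jB π' p) := by
  obtain ⟨hcard, hne, hdisj, hcov, hcol, huniq⟩ := h
  have hpos : 1 ≤ π'.card := Finset.card_pos.mpr ⟨p, hp⟩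
  show IsBSP (N+1) k r (insert (insert (Fin.last N) (upB p.1), p.2) (upPart (π'.erase p)))
  apply IsBSP_upPart hr
  · rw [Finset.card_erase_of_mem hp, hcard]
    rw [hcard] at hpos
    omega
  · exact fun q hq => hne q (Finset.mem_of_mem_erase hq)
  · exact fun a ha b hb hab =>
      hdisj a (Finset.mem_of_mem_erase ha) b (Finset.mem_of_mem_erase hb) hab
  · intro q hq
    obtain ⟨hqp, hqπ⟩ := Finset.mem_erase.mp hq
    exact hdisj p hp q hqπ (fun e => hqp e.symm)
  · intro x
    obtain ⟨q, hq, hx⟩ := hcov x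
    by_cases hqp : q = p
    · subst hqp; exact Or.inl hx
    · exact Or.inr ⟨q, Finset.mem_erase.mpr ⟨hqp, hq⟩, hx⟩
  · exact fun q hq => hcol q (Finset.mem_of_mem_erase hq)
  · exact hcol p hp
  · exact fun q hq => huniq q (Finset.mem_of_mem_erase hq)
  · exact huniq p hp

lemma lam_not_mem_jB {π' : Finset (Finset (Fin N) × Bool)}
    (hne : ∀ p ∈ π', p.1.Nonempty) {p} (hp : p ∈ π') : lam N ∉ jB π' p := by
  intro hmem
  rcases Finset.mem_insert.mp hmem with heq | hmem'
  · obtain ⟨x, hx⟩ := hne p hp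
    have h1 : x.castSucc ∈ (newblk p).1 :=
      Finset.mem_insert_of_mem (castSucc_mem_upB.mpr hx)
    rw [← heq] at h1
    exact (Fin.castSucc_lt_last x).ne (Finset.mem_singleton.mp h1)
  · exact lam_not_mem_upPart _ hmem'

lemma downPart_jB {π' : Finset (Finset (Fin N) × Bool)} {p} (hp : p ∈ π') :
    downPart (jB π' p) = π' := by
  rw [jB, downPart, Finset.image_insert, dP_newblk]
  have : Finset.image dP (upPart (π'.erase p)) = π'.erase p := downPart_upPart _
  rw [this, Finset.insert_erase hp]

lemma jB_iB {m : ℕ} {π : Finset (Finset (Fin (N+1)) × Bool)} (hr : r ≤ N)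
    (h : IsBSP (N+1) m r π) (hΛ : lam N ∉ π) :
    jB (downPart π) (dP (theLastBlock π)) = π := by
  obtain ⟨hqπ, hqL⟩ := theLastBlock_spec h
  set q := theLastBlock π with hq
  have hinj := dP_injOn (exists_ne_last hr h hΛ) h.2.2.1
  have h1 : newblk (dP q) = q := by
    show (insert (Fin.last N) (upB (downB q.1)), q.2) = q
    rw [upB_downB_erase, Finset.insert_erase hqL]
  have h2 : (downPart π).erase (dP q) = (π.erase q).image dP := by
    rw [downPart, image_erase_of_injOn hinj hqπ]
  have h3 : upPart ((π.erase q).image dP) = π.erase q := by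
    have hL : ∀ p ∈ π.erase q, Fin.last N ∉ p.1 := by
      intro p hpe hLp
      obtain ⟨hpq, hpπ⟩ := Finset.mem_erase.mp hpe
      exact hpq (block_eq h hpπ hqπ hLp hqL)
    exact upPart_downPart hL
  rw [jB, h1, h2, h3, Finset.insert_erase hqπ]

lemma prod_vf_downPart_erase {π : Finset (Finset (Fin (N+1)) × Bool)} {m : ℕ} (hr : r ≤ N)
    (h : IsBSP (N+1) m r π) (hΛ : lam N ∉ π) :
    ∏ p ∈ (downPart π).erase (dP (theLastBlock π)), vf p
      = ∏ p ∈ π.erase (theLastBlock π), vf p := by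
  obtain ⟨hqπ, hqL⟩ := theLastBlock_spec h
  have hinj := dP_injOn (exists_ne_last hr h hΛ) h.2.2.1
  rw [downPart, image_erase_of_injOn hinj hqπ]
  rw [Finset.prod_image (fun a ha b hb hab =>
    hinj a (Finset.mem_of_mem_erase ha) b (Finset.mem_of_mem_erase hb) hab)]
  apply Finset.prod_congr rfl
  intro p hpe
  apply vf_dP_of_not_last
  intro hLp
  obtain ⟨hpq, hpπ⟩ := Finset.mem_erase.mp hpe
  exact hpq (block_eq h hpπ hqπ hLp hqL)

lemma sumB (hr : r ≤ N) :
    ∑ π ∈ (Finset.univ.filter (fun π : Finset (Finset (Fin (N+1)) × Bool) =>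
        IsBSP (N+1) k r π)).filter (fun π => lam N ∉ π), ∏ p ∈ π, vf p
      = del (Sfin N k r) := by
  rw [Sfin, del_sum]
  have hmem : ∀ {π : Finset (Finset (Fin (N+1)) × Bool)},
      π ∈ (Finset.univ.filter (fun π : Finset (Finset (Fin (N+1)) × Bool) =>
        IsBSP (N+1) k r π)).filter (fun π => lam N ∉ π) →
      IsBSP (N+1) k r π ∧ lam N ∉ π := by
    intro π hπ
    obtain ⟨h1, h2⟩ := Finset.mem_filter.mp hπ
    exact ⟨(Finset.mem_filter.mp h1).2, h2⟩
  calc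
    ∑ π ∈ (Finset.univ.filter (fun π : Finset (Finset (Fin (N+1)) × Bool) =>
        IsBSP (N+1) k r π)).filter (fun π => lam N ∉ π), ∏ p ∈ π, vf p
      = ∑ x ∈ (Finset.univ.filter (fun π' : Finset (Finset (Fin N) × Bool) =>
          IsBSP N k r π')).sigma (fun π' => π'),
          del (vf x.2) * ∏ q ∈ x.1.erase x.2, vf q := by
        apply Finset.sum_nbij'
          (i := fun π => (⟨downPart π, dP (theLastBlock π)⟩ :
            (_ : Finset (Finset (Fin N) × Bool)) × (Finset (Fin N) × Bool)))
          (j := fun x => jB x.1 x.2)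
        · intro π hπ
          obtain ⟨h, hΛ⟩ := hmem hπ
          rw [Finset.mem_sigma]
          constructor
          · rw [Finset.mem_filter]
            refine ⟨Finset.mem_univ _, ?_⟩
            exact IsBSP_downPart hr h.1 (exists_ne_last hr h hΛ) h.2.2.1
              (fun x => h.2.2.2.1 x.castSucc) h.2.2.2.2.1 h.2.2.2.2.2
          · exact Finset.mem_image_of_mem dP (theLastBlock_spec h).1
        · intro x hx
          rw [Finset.mem_sigma] at hx
          obtain ⟨hx1, hx2⟩ := hx
          have h' := (Finset.mem_filter.mp hx1).2
          rw [Finset.mem_filter]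
          refine ⟨Finset.mem_filter.mpr ⟨Finset.mem_univ _, isbsp_jB hr h' hx2⟩, ?_⟩
          exact lam_not_mem_jB h'.2.1 hx2
        · intro π hπ
          obtain ⟨h, hΛ⟩ := hmem hπ
          exact jB_iB hr h hΛ
        · intro x hx
          rw [Finset.mem_sigma] at hx
          obtain ⟨hx1, hx2⟩ := hx
          have h' := (Finset.mem_filter.mp hx1).2
          have hbsp := isbsp_jB hr h' hx2
          have hlb : theLastBlock (jB x.1 x.2) = newblk x.2 :=
            theLastBlock_eq hbsp (newblk_mem_self _ _) (last_mem_newblk _)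
          refine Sigma.ext ?_ ?_
          · exact downPart_jB hx2
          · show HEq (dP (theLastBlock (jB x.1 x.2))) x.2
            rw [hlb, dP_newblk]
        · intro π hπ
          obtain ⟨h, hΛ⟩ := hmem hπ
          obtain ⟨hqπ, hqL⟩ := theLastBlock_spec h
          show (∏ p ∈ π, vf p) = del (vf (dP (theLastBlock π))) * _
          rw [del_vf_dP hqL, prod_vf_downPart_erase hr h hΛ,
            ← Finset.prod_insert (Finset.notMem_erase (theLastBlock π) π),
            Finset.insert_erase hqπ]
    _ = ∑ π' ∈ Finset.univ.filter (fun π' : Finset (Finset (Fin N) × Bool) =>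
          IsBSP N k r π'), ∑ p ∈ π',
          del (vf p) * ∏ q ∈ π'.erase p, vf q := Finset.sum_sigma _ _ _
    _ = ∑ π' ∈ Finset.univ.filter (fun π' : Finset (Finset (Fin N) × Bool) =>
          IsBSP N k r π'), del (∏ p ∈ π', vf p) := by
        exact Finset.sum_congr rfl fun π' _ => (del_prod π' vf).symm

end sums
section sumsA

variable {N k r : ℕ}

lemma vf_lam : vf (lam N) = vb 1 := by
  simp [vf, lam]

lemma isbsp_jA (hr : r ≤ N) {π' : Finset (Finset (Fin N) × Bool)}
    (h : IsBSP N k r π') : IsBSP (N+1) (k+1) r (jA π') := by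
  obtain ⟨hcard, hne, hdisj, hcov, hcol, huniq⟩ := h
  have hlam : lam N = (insert (Fin.last N) (upB (∅ : Finset (Fin N))), false) := by
    simp [lam, upB]
  rw [jA, hlam]
  apply IsBSP_upPart hr
  · omega
  · exact hne
  · exact hdisj
  · intro q _; simp
  · exact fun x => Or.inr (hcov x)
  · exact hcol
  · simp
  · exact huniq
  · simp

lemma isbsp_iA (hr : r ≤ N) {π : Finset (Finset (Fin (N+1)) × Bool)}
    (h : IsBSP (N+1) (k+1) r π) (hΛ : lam N ∈ π) : IsBSP N k r (iA π) := by
  have hlast : ∀ p ∈ π.erase (lam N), Fin.last N ∉ p.1 := by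
    intro p hpe hLp
    obtain ⟨hpl, hpπ⟩ := Finset.mem_erase.mp hpe
    exact hpl (block_eq h hpπ hΛ hLp (Finset.mem_singleton_self _))
  rw [iA]
  apply IsBSP_downPart hr
  · rw [Finset.card_erase_of_mem hΛ, h.1]
    omega
  · intro p hpe
    obtain ⟨x, hx⟩ := h.2.1 p (Finset.mem_of_mem_erase hpe)
    exact ⟨x, hx, fun e => hlast p hpe (e ▸ hx)⟩
  · exact fun a ha b hb hab =>
      h.2.2.1 a (Finset.mem_of_mem_erase ha) b (Finset.mem_of_mem_erase hb) hab
  · intro x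
    obtain ⟨p, hp, hxp⟩ := h.2.2.2.1 x.castSucc
    refine ⟨p, Finset.mem_erase.mpr ⟨?_, hp⟩, hxp⟩
    rintro rfl
    exact (Fin.castSucc_lt_last x).ne (Finset.mem_singleton.mp hxp)
  · exact fun p hp => h.2.2.2.2.1 p (Finset.mem_of_mem_erase hp)
  · exact fun p hp => h.2.2.2.2.2 p (Finset.mem_of_mem_erase hp)

lemma jA_iA {π : Finset (Finset (Fin (N+1)) × Bool)} {m : ℕ}
    (h : IsBSP (N+1) m r π) (hΛ : lam N ∈ π) : jA (iA π) = π := by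
  have hlast : ∀ p ∈ π.erase (lam N), Fin.last N ∉ p.1 := by
    intro p hpe hLp
    obtain ⟨hpl, hpπ⟩ := Finset.mem_erase.mp hpe
    exact hpl (block_eq h hpπ hΛ hLp (Finset.mem_singleton_self _))
  rw [jA, iA, upPart_downPart hlast, Finset.insert_erase hΛ]

lemma sumA (hr : r ≤ N) :
    ∑ π ∈ (Finset.univ.filter (fun π : Finset (Finset (Fin (N+1)) × Bool) =>
        IsBSP (N+1) (k+1) r π)).filter (fun π => lam N ∈ π), ∏ p ∈ π, vf p
      = vb 1 * Sfin N k r := by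
  rw [Sfin, Finset.mul_sum]
  have hmem : ∀ {π : Finset (Finset (Fin (N+1)) × Bool)},
      π ∈ (Finset.univ.filter (fun π : Finset (Finset (Fin (N+1)) × Bool) =>
        IsBSP (N+1) (k+1) r π)).filter (fun π => lam N ∈ π) →
      IsBSP (N+1) (k+1) r π ∧ lam N ∈ π := by
    intro π hπ
    obtain ⟨h1, h2⟩ := Finset.mem_filter.mp hπ
    exact ⟨(Finset.mem_filter.mp h1).2, h2⟩
  apply Finset.sum_nbij' (i := iA) (j := jA)
  · intro π hπ
    obtain ⟨h, hΛ⟩ := hmem hπ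
    exact Finset.mem_filter.mpr ⟨Finset.mem_univ _, isbsp_iA hr h hΛ⟩
  · intro π' hπ'
    have h' := (Finset.mem_filter.mp hπ').2
    refine Finset.mem_filter.mpr ⟨Finset.mem_filter.mpr
      ⟨Finset.mem_univ _, isbsp_jA hr h'⟩, Finset.mem_insert_self _ _⟩
  · intro π hπ
    obtain ⟨h, hΛ⟩ := hmem hπ
    exact jA_iA h hΛ
  · intro π' _
    exact iA_jA π'
  · intro π hπ
    obtain ⟨h, hΛ⟩ := hmem hπ
    have hlast : ∀ p ∈ π.erase (lam N), Fin.last N ∉ p.1 := by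
      intro p hpe hLp
      obtain ⟨hpl, hpπ⟩ := Finset.mem_erase.mp hpe
      exact hpl (block_eq h hpπ hΛ hLp (Finset.mem_singleton_self _))
    have hinj := dP_injOn (π := π.erase (lam N))
      (fun p hpe => by
        obtain ⟨x, hx⟩ := h.2.1 p (Finset.mem_of_mem_erase hpe)
        exact ⟨x, hx, fun e => hlast p hpe (e ▸ hx)⟩)
      (fun a ha b hb hab =>
        h.2.2.1 a (Finset.mem_of_mem_erase ha) b (Finset.mem_of_mem_erase hb) hab)
    have hprod : ∏ p ∈ iA π, vf p = ∏ p ∈ π.erase (lam N), vf p := by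
      rw [iA, downPart, Finset.prod_image hinj]
      exact Finset.prod_congr rfl fun p hpe => vf_dP_of_not_last (hlast p hpe)
    rw [hprod, ← vf_lam, ← Finset.prod_insert (Finset.notMem_erase (lam N) π),
      Finset.insert_erase hΛ]

end sumsA

section recur

variable {N k r : ℕ}

lemma Sfin_succ_succ (hr : r ≤ N) :
    Sfin (N+1) (k+1) r = vb 1 * Sfin N k r + del (Sfin N (k+1) r) := by
  conv_lhs => rw [Sfin]
  rw [← Finset.sum_filter_add_sum_filter_not _ (fun π => lam N ∈ π), sumA hr, sumB hr]

lemma Sfin_succ_zero (hr : r ≤ N) :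
    Sfin (N+1) 0 r = del (Sfin N 0 r) := by
  conv_lhs => rw [Sfin]
  rw [← Finset.sum_filter_add_sum_filter_not _ (fun π => lam N ∈ π)]
  have hempty : (Finset.univ.filter (fun π : Finset (Finset (Fin (N+1)) × Bool) =>
      IsBSP (N+1) 0 r π)).filter (fun π => lam N ∈ π) = ∅ := by
    rw [Finset.filter_eq_empty_iff]
    intro π hπ
    exact fun hΛ => lam_not_mem_of_k_zero hr (Finset.mem_filter.mp hπ).2 hΛ
  rw [hempty, Finset.sum_empty, zero_add, sumB hr]

lemma filter_base (r : ℕ) :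
    Finset.univ.filter (fun π : Finset (Finset (Fin r) × Bool) => IsBSP r 0 r π)
      = {Finset.univ.image (fun i : Fin r => ({i}, true))} := by
  ext π
  rw [Finset.mem_filter, Finset.mem_singleton]
  constructor
  · rintro ⟨-, h⟩
    obtain ⟨hcard, hne, hdisj, hcov, hcol, huniq⟩ := h
    have hblock : ∀ p ∈ π, ∀ x ∈ p.1, p = ({x}, true) := by
      intro p hp x hx
      have hpt : p.2 = true := (hcol p hp).mpr ⟨x, hx, x.isLt⟩
      have hps : p.1 = {x} := Finset.eq_singleton_iff_unique_mem.mpr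
        ⟨hx, fun y hy => huniq p hp y hy x hx y.isLt x.isLt⟩
      exact Prod.ext hps hpt
    ext p
    rw [Finset.mem_image]
    constructor
    · intro hp
      obtain ⟨x, hx⟩ := hne p hp
      exact ⟨x, Finset.mem_univ x, (hblock p hp x hx).symm⟩
    · rintro ⟨x, -, rfl⟩
      obtain ⟨p, hp, hxp⟩ := hcov x
      rw [← hblock p hp x hxp]
      exact hp
  · rintro rfl
    refine ⟨Finset.mem_univ _, ?_, ?_, ?_, ?_, ?_, ?_⟩
    · rw [Finset.card_image_of_injective _ (fun i j h => by
        simpa using congrArg Prod.fst h), Finset.card_univ, Fintype.card_fin]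
      omega
    · rintro p hp
      obtain ⟨x, -, rfl⟩ := Finset.mem_image.mp hp
      exact ⟨x, Finset.mem_singleton_self x⟩
    · rintro p hp q hq hpq
      obtain ⟨x, -, rfl⟩ := Finset.mem_image.mp hp
      obtain ⟨y, -, rfl⟩ := Finset.mem_image.mp hq
      have hxy : x ≠ y := fun e => hpq (by rw [e])
      exact Finset.disjoint_singleton.mpr hxy
    · intro x
      exact ⟨({x}, true), Finset.mem_image_of_mem _ (Finset.mem_univ x),
        Finset.mem_singleton_self x⟩
    · rintro p hp
      obtain ⟨x, -, rfl⟩ := Finset.mem_image.mp hp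
      simp only [true_iff]
      exact ⟨x, Finset.mem_singleton_self x, x.isLt⟩
    · rintro p hp i hi j hj - -
      obtain ⟨x, -, rfl⟩ := Finset.mem_image.mp hp
      rw [Finset.mem_singleton.mp hi, Finset.mem_singleton.mp hj]

lemma Sfin_base (r : ℕ) : Sfin r 0 r = va 1 ^ r := by
  rw [Sfin, filter_base, Finset.sum_singleton]
  rw [Finset.prod_image (fun i _ j _ h => by simpa using congrArg Prod.fst h)]
  have : ∀ i : Fin r, vf (({i}, true) : Finset (Fin r) × Bool) = va 1 := by
    intro i; simp [vf]
  rw [Finset.prod_congr rfl (fun i _ => this i), Finset.prod_const,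
    Finset.card_univ, Fintype.card_fin]

lemma Sfin_base_pos (k r : ℕ) : Sfin r (k + 1) r = 0 := by
  rw [Sfin, Finset.filter_eq_empty_iff.mpr, Finset.sum_empty]
  intro π _ h
  have hc := card_true_blocks (le_refl r) h
  have hall : π.filter (fun p => p.2 = true) = π := by
    apply Finset.filter_true_of_mem
    intro p hp
    obtain ⟨x, hx⟩ := h.2.1 p hp
    exact (h.2.2.2.2.1 p hp).mpr ⟨x, hx, x.isLt⟩
  rw [hall, h.1] at hc
  omega

lemma stmt2' : ∀ n k r : ℕ, rBell n k r = Sfin (n + r) k r := by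
  intro n
  induction n with
  | zero =>
    intro k r
    rw [rBell_zero, Nat.zero_add]
    cases k with
    | zero => rw [if_pos rfl, Sfin_base]
    | succ k => rw [if_neg (Nat.succ_ne_zero k), Sfin_base_pos]
  | succ n ih =>
    intro k r
    have hr : r ≤ n + r := Nat.le_add_left r n
    have hN : n + 1 + r = (n + r) + 1 := by omega
    cases k with
    | zero =>
      rw [rBell_succ_zero, ih 0 r,
        show Sfin (n+1+r) 0 r = Sfin ((n+r)+1) 0 r from by rw [hN],
        Sfin_succ_zero hr]
    | succ k =>
      rw [rBell_succ_succ, ih k r, ih (k+1) r,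
        show Sfin (n+1+r) (k+1) r = Sfin ((n+r)+1) (k+1) r from by rw [hN],
        Sfin_succ_succ hr]

end recur

/-- For `n ≥ k ≥ 0` and `r ≥ 0`, the partial `r`-Bell polynomial
`B^r_{n+r,k+r} ∈ R` is the sum, over all bicolored set partitions `π ∈ S^r_{n+r,k+r}`, of
`∏_{blocks B colored 1} a_{|B|} · ∏_{blocks B colored 2} b_{|B|}`. -/
theorem stmt2 (n k r : ℕ) (hkn : k ≤ n) :
    rBell n k r =
      ∑ π ∈ Finset.univ.filter
          (fun π : Finset (Finset (Fin (n + r)) × Bool) => IsBSP (n + r) k r π),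
        ∏ p ∈ π, (if p.2 then va p.1.card else vb p.1.card) := by
  exact stmt2' n k r
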